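/- Let C_glob = C_out · diag(A_1,...,A_g) ⊆ F^n where A_i ∈ F_q^{r_i × n_i} are full-rank over the subfield F_q, C_out ⊆ F^N, N = Σ r_i, and |C_out| = |C_glob| = |F|^k. If an erasure pattern E ⊆ [n] with remaining coordinates R_i = Γ_i \ E satisfies Σ_{i=1}^g Rk(A_i|_{R_i}) < k, then no decoder can recover every codeword of C_glob from its restriction to [n] \ E, regardless of the choice of outer code C_out. -/

import Mathlib

/-- Sum-rank weight of a block vector over `Fq`: sum over the blocks of the
`Fq`-rank of the block (i.e. the `Fq`-dimension of the span of its entries). -/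
noncomputable def srWeight (Fq : Type*) [Field Fq] {F : Type*} [Field F] [Algebra Fq F]
    {g : ℕ} {r : Fin g → ℕ} (c : ∀ i : Fin g, Fin (r i) → F) : ℕ :=
  ∑ i, Module.finrank Fq (Submodule.span Fq (Set.range (c i)))

/-- Minimum sum-rank distance of a (possibly nonlinear) code. -/
noncomputable def srMinDist (Fq : Type*) [Field Fq] {F : Type*} [Field F] [Algebra Fq F]
    {g : ℕ} {r : Fin g → ℕ} (C : Set (∀ i : Fin g, Fin (r i) → F)) : ℕ :=
  sInf {w | ∃ c ∈ C, ∃ d ∈ C, c ≠ d ∧ w = srWeight Fq (c - d)}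

/-- Hamming weight of a block vector. -/
noncomputable def hamWeight {F : Type*} [Field F] [DecidableEq F]
    {g : ℕ} {r : Fin g → ℕ} (c : ∀ i : Fin g, Fin (r i) → F) : ℕ :=
  ∑ i, (Finset.univ.filter fun j => c i j ≠ 0).card

/-- Minimum Hamming distance of a (possibly nonlinear) code. -/
noncomputable def hamMinDist {F : Type*} [Field F] [DecidableEq F]
    {g : ℕ} {r : Fin g → ℕ} (C : Set (∀ i : Fin g, Fin (r i) → F)) : ℕ :=
  sInf {w | ∃ c ∈ C, ∃ d ∈ C, c ≠ d ∧ w = hamWeight (c - d)}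

/-- Blockwise multiplication of a block vector by a block-diagonal matrix
`diag(A_1, …, A_g)` with entries in the subfield `Fq`. -/
noncomputable def blockMul {Fq F : Type*} [Field Fq] [Field F] [Algebra Fq F]
    {g : ℕ} {r n : Fin g → ℕ} (c : ∀ i : Fin g, Fin (r i) → F)
    (A : ∀ i : Fin g, Matrix (Fin (r i)) (Fin (n i)) Fq) :
    ∀ i : Fin g, Fin (n i) → F :=
  fun i j => ∑ t, c i t * algebraMap Fq F (A i t j)

/-- Rank of the submatrix of `A` given by the columns indexed by `R`. -/
noncomputable def colRank {Fq : Type*} [Field Fq] {a b : ℕ}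
    (A : Matrix (Fin a) (Fin b) Fq) (R : Finset (Fin b)) : ℕ :=
  (A.submatrix id (fun j : R => (j : Fin b))).rank

/-- Restriction of a block vector to the unerased coordinates `R_i` in each block. -/
def restrictTo {F : Type*} {g : ℕ} {n : Fin g → ℕ} (R : ∀ i : Fin g, Finset (Fin (n i)))
    (c : ∀ i : Fin g, Fin (n i) → F) : ∀ i : Fin g, (R i) → F :=
  fun i j => c i j.1

open Matrix Module in
lemma rank_map_le' {Fq F : Type*} [Field Fq] [Field F] (f : Fq →+* F)
    {m o : Type*} [Fintype m] [Fintype o]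
    (M : Matrix m o Fq) : (M.map f).rank ≤ M.rank := by
  classical
  set S := Submodule.span Fq (Set.range Mᵀ) with hS
  have hfd : FiniteDimensional Fq S := inferInstance
  set d := finrank Fq S with hd
  have hdr : M.rank = d := M.rank_eq_finrank_span_cols
  let b : Basis (Fin d) Fq S := finBasis Fq S
  let C : Matrix m (Fin d) Fq := fun t i => (b i : m → Fq) t
  let B : Matrix (Fin d) o Fq := fun i j =>
    b.repr ⟨Mᵀ j, Submodule.subset_span (Set.mem_range_self j)⟩ i
  have hM : M = C * B := by
    ext t j
    have h := b.sum_repr ⟨Mᵀ j, Submodule.subset_span (Set.mem_range_self j)⟩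
    have h2 := congrFun (congrArg Subtype.val h) t
    simp only [Matrix.mul_apply, C, B]
    have h3 : M t j = (↑(∑ i : Fin d, (b.repr ⟨Mᵀ j, Submodule.subset_span (Set.mem_range_self j)⟩) i • b i) : m → Fq) t := by
      rw [h]; rfl
    rw [h3]
    push_cast
    simp [Finset.sum_apply, mul_comm]
    rfl
  calc (M.map f).rank = (C.map f * B.map f).rank := by rw [hM, Matrix.map_mul]
    _ ≤ (C.map f).rank := Matrix.rank_mul_le_left _ _
    _ ≤ Fintype.card (Fin d) := Matrix.rank_le_card_width _
    _ = d := Fintype.card_fin d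
    _ = M.rank := hdr.symm

/-- if `C_glob = C_out · diag(A_1,…,A_g)` with `|C_out| = |C_glob| = |F|^k`
and the unerased coordinates `R_i` satisfy `Σ_i Rk(A_i|_{R_i}) < k`, then no decoder
can recover every codeword of `C_glob` from its unerased coordinates (the restriction
map is not injective on `C_glob`), regardless of the choice of outer code. -/
theorem no_decoder_of_rank_lt
    {Fq F : Type*} [Field Fq] [Fintype Fq] [Field F] [Fintype F] [Algebra Fq F]
    {g : ℕ} {r n : Fin g → ℕ} (k : ℕ)
    (A : ∀ i : Fin g, Matrix (Fin (r i)) (Fin (n i)) Fq) (hA : ∀ i, (A i).rank = r i)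
    (R : ∀ i : Fin g, Finset (Fin (n i)))
    (hrank : ∑ i, colRank (A i) (R i) < k) :
    ∀ Cout : Set (∀ i : Fin g, Fin (r i) → F),
      Nat.card Cout = Fintype.card F ^ k →
      Nat.card ((fun c => blockMul c A) '' Cout) = Nat.card Cout →
      ¬ Set.InjOn (restrictTo R) ((fun c => blockMul c A) '' Cout) := by
  open Matrix Module in
  classical
  intro Cout hCout hCg hInj
  set f := algebraMap Fq F with hf
  set Cg := (fun c => blockMul c A) '' Cout with hCgdef
  let M : ∀ i : Fin g, Matrix (Fin (r i)) (R i) Fq :=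
    fun i => (A i).submatrix id (fun j : R i => (j : Fin (n i)))
  let p : ∀ i : Fin g, Submodule F ((R i) → F) :=
    fun i => LinearMap.range ((M i).map f).vecMulLinear
  -- restricted codewords lie in the product of the ranges
  have hsub : restrictTo R '' Cg ⊆ Set.pi Set.univ (fun i => (p i : Set ((R i) → F))) := by
    rintro x hx
    obtain ⟨y, ⟨c, hc, rfl⟩, rfl⟩ := hx
    intro i _
    exact ⟨c i, rfl⟩
  -- dimension bound on each range
  have hdim : ∀ i, finrank F (p i) ≤ colRank (A i) (R i) := by
    intro i
    have h1 : finrank F (p i) = ((M i).map f).rank := by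
      simp only [p]
      rw [Matrix.rank_eq_finrank_span_row]
      exact congrArg (fun S : Submodule F ((R i) → F) => finrank F S) (range_vecMulLinear _)
    rw [h1]
    exact rank_map_le' f (M i)
  -- cardinality bound
  have hcard : ∀ i, Nat.card (p i) ≤ Fintype.card F ^ colRank (A i) (R i) := by
    intro i
    haveI : Fintype (p i) := Fintype.ofFinite _
    rw [Nat.card_eq_fintype_card, card_eq_pow_finrank (K := F) (V := p i)]
    exact Nat.pow_le_pow_right Fintype.card_pos (hdim i)
  have hFone : 1 < Fintype.card F := Fintype.one_lt_card
  have key : Nat.card (restrictTo R '' Cg) < Fintype.card F ^ k := by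
    calc Nat.card (restrictTo R '' Cg)
        ≤ Nat.card (Set.pi Set.univ (fun i => (p i : Set ((R i) → F)))) :=
          Nat.card_mono (Set.toFinite _) hsub
      _ = ∏ i, Nat.card (p i) := by
          rw [Nat.card_congr (Equiv.Set.univPi _), Nat.card_pi]
          rfl
      _ ≤ ∏ i, Fintype.card F ^ colRank (A i) (R i) :=
          Finset.prod_le_prod (fun _ _ => Nat.zero_le _) (fun i _ => hcard i)
      _ = Fintype.card F ^ (∑ i, colRank (A i) (R i)) := by
          rw [← Finset.prod_pow_eq_pow_sum]
      _ < Fintype.card F ^ k := Nat.pow_lt_pow_right hFone hrank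
  have heq : Nat.card (restrictTo R '' Cg) = Fintype.card F ^ k := by
    have h := Set.ncard_image_of_injOn hInj
    rw [Nat.card_coe_set_eq, h, ← Nat.card_coe_set_eq, hCg, hCout]
  omega
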